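/- Let G ≤ Sym(M) be closed and locally oligomorphic on a countable set M, and fix a finite tuple ā ∈ Mⁿ. Let E = E₀ ⊆ E₁ ⊆ E₂ ⊆ ... be an increasing chain of finite G_E-invariant subsets of M, and let Aᵢ denote the G_{Eᵢ}-orbit of ā. Then there exists N ∈ ℕ such that Aᵢ = A_N for all i ≥ N. -/

import Mathlib

open Pointwise

/-- Topology of pointwise convergence on the symmetric group of a (discrete) set. -/
instance permTop (M : Type*) : TopologicalSpace (Equiv.Perm M) :=
  letI : TopologicalSpace M := ⊥
  TopologicalSpace.induced
    (fun g => ((fun x => g x, fun x => g.symm x) : (M → M) × (M → M))) inferInstance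

/-- A topological group is Roelcke precompact if every open neighbourhood `U` of the identity
admits a finite set `E` with `G = U * E * U`. -/
def RoelckePrecompact (G : Type*) [Group G] [TopologicalSpace G] : Prop :=
  ∀ U : Set G, IsOpen U → (1 : G) ∈ U →
    ∃ E : Finset G, ∀ x : G, ∃ u₁ ∈ U, ∃ e ∈ E, ∃ u₂ ∈ U, x = u₁ * e * u₂

/-- `Y` is a union of finitely many `G`-orbits. -/
def IsFinOrbitUnion {X : Type*} (G : Subgroup (Equiv.Perm X)) (Y : Set X) : Prop :=
  ∃ S : Finset X, Y = ⋃ a ∈ S, MulAction.orbit G a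

/-- `G` acts oligomorphically on `Y`: finitely many orbits on `Yⁿ` for all `n`. -/
def Oligo {X : Type*} (G : Subgroup (Equiv.Perm X)) (Y : Set X) : Prop :=
  ∀ n : ℕ, ∃ T : Finset (Fin n → X), ∀ f : Fin n → X, (∀ i, f i ∈ Y) →
    ∃ t ∈ T, ∃ g ∈ G, ∀ i, g (t i) = f i

/-- `G` is locally oligomorphic on `X`. -/
def LocallyOligo {X : Type*} (G : Subgroup (Equiv.Perm X)) : Prop :=
  ∀ Y : Set X, IsFinOrbitUnion G Y → Oligo G Y

/-- The pointwise stabilizer of `E` in `G ≤ Sym(M)`. -/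
def ptStab {M : Type*} (G : Subgroup (Equiv.Perm M)) (E : Set M) : Subgroup (Equiv.Perm M) :=
  G ⊓ ⨅ a ∈ E, MulAction.stabilizer (Equiv.Perm M) a

/-- The algebraic closure of `E`: the union of the finite orbits of the pointwise
stabilizer of `E` in `G`. -/
def acl {M : Type*} (G : Subgroup (Equiv.Perm M)) (E : Set M) : Set M :=
  {x | (MulAction.orbit (ptStab G E) x).Finite}

/-- The intersection of the open finite-index subgroups of a topological group. -/
def Gcirc (G : Type*) [Group G] [TopologicalSpace G] : Subgroup G :=
  ⨅ U ∈ {U : Subgroup G | IsOpen (U : Set G) ∧ U.index ≠ 0}, U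

-- probes

/-- For an increasing chain `E₀ ⊆ E₁ ⊆ ⋯` of finite `G_{E₀}`-invariant sets, the chain of
orbits of a fixed tuple under the pointwise stabilizers `G_{Eᵢ}` stabilizes. -/
theorem orbit_chain_stabilizes {M : Type*} [Countable M] (G : Subgroup (Equiv.Perm M))
    (hclosed : IsClosed (G : Set (Equiv.Perm M))) (holig : LocallyOligo G)
    {n : ℕ} (a : Fin n → M) (E : ℕ → Set M) (hfin : ∀ i, (E i).Finite)
    (hchain : ∀ i, E i ⊆ E (i + 1))
    (hinv : ∀ i, ∀ g ∈ ptStab G (E 0), ∀ x ∈ E i, g x ∈ E i) :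
    ∃ N : ℕ, ∀ i ≥ N,
      MulAction.orbit (ptStab G (E i)) a = MulAction.orbit (ptStab G (E N)) a := by
  classical
  set A : ℕ → Set (Fin n → M) := fun i => MulAction.orbit (ptStab G (E i)) a with hA
  -- membership in the pointwise stabilizer
  have hmem : ∀ (F : Set M) (g : Equiv.Perm M),
      g ∈ ptStab G F ↔ g ∈ G ∧ ∀ x ∈ F, g x = x := by
    intro F g
    simp [ptStab, Subgroup.mem_inf, Subgroup.mem_iInf, MulAction.mem_stabilizer_iff,
      Equiv.Perm.smul_def]
  -- orbit membership
  have horb : ∀ i (b : Fin n → M), b ∈ A i ↔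
      ∃ g : Equiv.Perm M, g ∈ ptStab G (E i) ∧ ∀ j, g (a j) = b j := by
    intro i b
    constructor
    · rintro ⟨⟨g, hg⟩, rfl⟩
      exact ⟨g, hg, fun j => rfl⟩
    · rintro ⟨g, hg, hgb⟩
      exact ⟨⟨g, hg⟩, funext hgb⟩
  -- chains
  have hEmono : ∀ i j, i ≤ j → E i ⊆ E j := by
    intro i j hij
    induction hij with
    | refl => exact subset_rfl
    | step h ih => exact ih.trans (hchain _)
  have hanti : ∀ i j, i ≤ j → ptStab G (E j) ≤ ptStab G (E i) := by
    intro i j hij g hg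
    rw [hmem] at hg ⊢
    exact ⟨hg.1, fun x hx => hg.2 x (hEmono i j hij hx)⟩
  have hAanti : ∀ i j, i ≤ j → A j ⊆ A i := by
    intro i j hij b hb
    obtain ⟨g, hg, hgb⟩ := (horb j b).1 hb
    exact (horb i b).2 ⟨g, hanti i j hij hg, hgb⟩
  -- normality of ptStab G (E i) in ptStab G (E 0)
  have hnorm : ∀ i, ∀ g ∈ ptStab G (E 0), ∀ h ∈ ptStab G (E i),
      g * h * g⁻¹ ∈ ptStab G (E i) := by
    intro i g hg h hh
    obtain ⟨hgG, hgfix⟩ := (hmem _ g).1 hg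
    obtain ⟨hhG, hhfix⟩ := (hmem _ h).1 hh
    refine (hmem _ _).2 ⟨G.mul_mem (G.mul_mem hgG hhG) (G.inv_mem hgG), fun x hx => ?_⟩
    have hginv : g⁻¹ ∈ ptStab G (E 0) := (ptStab G (E 0)).inv_mem hg
    have h1 : (g⁻¹ : Equiv.Perm M) x ∈ E i := hinv i g⁻¹ hginv x hx
    simp only [Equiv.Perm.mul_apply]
    rw [hhfix _ h1]
    exact Equiv.apply_symm_apply g x
  -- enumeration of E 0
  obtain ⟨k, e, he⟩ : ∃ (k : ℕ) (e : Fin k → M), ∀ x, x ∈ E 0 ↔ ∃ j, e j = x := by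
    let l := (hfin 0).toFinset.toList
    refine ⟨l.length, fun j => l.get j, fun x => ?_⟩
    rw [← (hfin 0).mem_toFinset, ← Finset.mem_toList]
    exact List.mem_iff_get
  -- the finite union of orbits
  set S : Finset M := Finset.image e Finset.univ ∪ Finset.image a Finset.univ with hS
  set Y : Set M := ⋃ s ∈ S, MulAction.orbit G s with hY
  have hSY : ∀ x ∈ S, x ∈ Y := fun x hx => Set.mem_biUnion hx (MulAction.mem_orbit_self x)
  have hmemY : ∀ (x : M), x ∈ S → ∀ g : Equiv.Perm M, g ∈ G → g x ∈ Y :=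
    fun x hx g hg => Set.mem_biUnion hx ⟨⟨g, hg⟩, rfl⟩
  obtain ⟨T, hT⟩ := holig Y ⟨S, rfl⟩ (k + (n + n))
  -- the encoding tuple
  set F : (Fin n → M) → (Fin (k + (n + n)) → M) :=
    fun b => Fin.append e (Fin.append a b) with hF
  have hFY : ∀ b, b ∈ A 0 → ∀ j, F b j ∈ Y := by
    intro b hb j
    obtain ⟨g, hg, hgb⟩ := (horb 0 b).1 hb
    have hgG : g ∈ G := ((hmem _ g).1 hg).1
    refine Fin.addCases (fun j1 => ?_) (fun j2 => ?_) j
    · rw [hF]; simp only [Fin.append_left]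
      exact hSY _ (by simp [hS])
    · refine Fin.addCases (fun j2a => ?_) (fun j2b => ?_) j2
      · rw [hF]; simp only [Fin.append_right, Fin.append_left]
        exact hSY _ (by simp [hS])
      · rw [hF]; simp only [Fin.append_right]
        rw [← hgb j2b]
        exact hmemY _ (by simp [hS]) g hgG
  -- key lemma : a G-map between encoded tuples gives an element of ptStab G (E 0)
  have hkey : ∀ b b' : Fin n → M, (∃ g ∈ G, ∀ j, g (F b j) = F b' j) →
      ∃ g, g ∈ ptStab G (E 0) ∧ (∀ j, g (a j) = a j) ∧ ∀ j, g (b j) = b' j := by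
    rintro b b' ⟨g, hg, hgf⟩
    have h1 : ∀ j1 : Fin k, g (e j1) = e j1 := by
      intro j1
      have := hgf (Fin.castAdd (n + n) j1)
      rw [hF] at this; simpa only [Fin.append_left] using this
    have h2 : ∀ j : Fin n, g (a j) = a j := by
      intro j
      have := hgf (Fin.natAdd k (Fin.castAdd n j))
      rw [hF] at this; simpa only [Fin.append_right, Fin.append_left] using this
    have h3 : ∀ j : Fin n, g (b j) = b' j := by
      intro j
      have := hgf (Fin.natAdd k (Fin.natAdd n j))
      rw [hF] at this; simpa only [Fin.append_right] using this
    refine ⟨g, (hmem _ g).2 ⟨hg, fun x hx => ?_⟩, h2, h3⟩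
    obtain ⟨j1, rfl⟩ := (he x).1 hx
    exact h1 j1
  -- saturation of A i under types over (E 0, a)
  have hsat : ∀ i (b b' : Fin n → M), b ∈ A i →
      (∃ g, g ∈ ptStab G (E 0) ∧ (∀ j, g (a j) = a j) ∧ ∀ j, g (b j) = b' j) →
      b' ∈ A i := by
    rintro i b b' hb ⟨g, hg, hga, hgb⟩
    obtain ⟨h, hh, hha⟩ := (horb i b).1 hb
    refine (horb i b').2 ⟨g * h * g⁻¹, hnorm i g hg h hh, fun j => ?_⟩
    have hai : (g⁻¹ : Equiv.Perm M) (a j) = a j := by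
      have := congrArg (fun y => (g⁻¹ : Equiv.Perm M) y) (hga j)
      simpa using this.symm
    simp only [Equiv.Perm.mul_apply]
    rw [hai, hha j, hgb j]
  -- the type of an orbit element
  have htype : ∀ b ∈ A 0, ∃ t ∈ T, ∃ g ∈ G, ∀ j, g (t j) = F b j :=
    fun b hb => hT (F b) (hFY b hb)
  -- the set of realized types
  set D : ℕ → Finset (Fin (k + (n + n)) → M) :=
    fun i => T.filter (fun t => ∃ b ∈ A i, ∃ g ∈ G, ∀ j, g (t j) = F b j) with hD
  have hDanti : ∀ i j, i ≤ j → D j ⊆ D i := by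
    intro i j hij t ht
    rw [hD] at ht ⊢
    obtain ⟨htT, b, hb, hg⟩ := Finset.mem_filter.1 ht
    exact Finset.mem_filter.2 ⟨htT, b, hAanti i j hij hb, hg⟩
  -- reconstruction of A i from D i
  have hrec : ∀ i (b : Fin n → M), b ∈ A 0 →
      (b ∈ A i ↔ ∃ t ∈ D i, ∃ g ∈ G, ∀ j, g (t j) = F b j) := by
    intro i b hb0
    constructor
    · intro hbi
      obtain ⟨t, ht, g, hg, hgt⟩ := htype b hb0
      exact ⟨t, by rw [hD]; exact Finset.mem_filter.2 ⟨ht, b, hbi, g, hg, hgt⟩, g, hg, hgt⟩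
    · rintro ⟨t, htD, g, hg, hgt⟩
      rw [hD] at htD
      obtain ⟨-, b', hb', g', hg', hg't⟩ := Finset.mem_filter.1 htD
      refine hsat i b' b hb' (hkey b' b ⟨g * g'⁻¹, G.mul_mem hg (G.inv_mem hg'), fun j => ?_⟩)
      have h1 : (g'⁻¹ : Equiv.Perm M) (F b' j) = t j := by
        rw [← hg't j]; exact Equiv.symm_apply_apply g' (t j)
      simp only [Equiv.Perm.mul_apply]
      rw [h1, hgt j]
  -- the cardinalities of D stabilize
  have hne : (Set.range fun i => (D i).card).Nonempty := ⟨(D 0).card, 0, rfl⟩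
  obtain ⟨N, hN⟩ := Nat.sInf_mem hne
  refine ⟨N, fun i hi => ?_⟩
  have hDeq : D i = D N := by
    refine Finset.eq_of_subset_of_card_le (hDanti N i hi) ?_
    exact le_trans (le_of_eq hN) (Nat.sInf_le ⟨i, rfl⟩)
  have hfinal : A i = A N := by
    ext b
    constructor
    · intro hb
      have hb0 : b ∈ A 0 := hAanti 0 i (Nat.zero_le i) hb
      exact (hrec N b hb0).2 (hDeq ▸ (hrec i b hb0).1 hb)
    · intro hb
      have hb0 : b ∈ A 0 := hAanti 0 N (Nat.zero_le N) hb
      exact (hrec i b hb0).2 (hDeq.symm ▸ (hrec N b hb0).1 hb)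
  simpa only [hA] using hfinal
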